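/- Let $\hat{Z}_m = (\cumstep_m)^{-1/2} \sum_{k=k_m}^{k_{m+1}-1} \sqrt{\gamma_k}\, \Gamma^{-1/2} M_k$ and $S_m = I_m^{-1/2} \sum_{k=k_m}^{k_{m+1}-1} \Gamma^{-1/2} M_k$, where $\{M_k\}$ is a martingale difference sequence with Rosenthal constant $\kappa_p$, $\gamma_k = \gamma_1 k^{-a}$, $\cumstep_m = \sum_{k=k_m}^{k_{m+1}-1}\gamma_k$, $I_m = k_{m+1}-k_m \le k_m$. If $Z$ is a standard Gaussian vector and $\mathcal{W}_p(S_m, Z) < \infty$, then $\mathcal{W}_p(\hat{Z}_m, Z) \le C_p^{BR} \kappa_p \cdot a I_m / k_m + \mathcal{W}_p(S_m, Z)$. -/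

import Mathlib

open MeasureTheory ProbabilityTheory Finset
open scoped ENNReal

/-- Euclidean norm of a vector in `ℝ^d`. -/
noncomputable def eucl {d : ℕ} (v : Fin d → ℝ) : ℝ := Real.sqrt (∑ i, v i ^ 2)

/-- Wasserstein-`p` distance (Euclidean cost) between measures on `ℝ^d`,
as an infimum over couplings. -/
noncomputable def Wp {d : ℕ} (p : ℝ) (μ ν : Measure (Fin d → ℝ)) : ℝ≥0∞ :=
  ⨅ (π : Measure ((Fin d → ℝ) × (Fin d → ℝ)))
    (_ : π.map Prod.fst = μ ∧ π.map Prod.snd = ν),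
    (∫⁻ q, ENNReal.ofReal (eucl (q.1 - q.2)) ^ p ∂π) ^ (1 / p)

/-- Standard Gaussian measure on `ℝ^d`. -/
noncomputable def stdGaussian (d : ℕ) : Measure (Fin d → ℝ) :=
  Measure.pi fun _ : Fin d => gaussianReal 0 1

/-- `L^p` norm of a random vector. -/
noncomputable def LpN {d : ℕ} {Ω : Type*} [MeasurableSpace Ω] (μ : Measure Ω)
    (p : ℝ) (f : Ω → Fin d → ℝ) : ℝ≥0∞ :=
  (∫⁻ ω, ENNReal.ofReal (eucl (f ω)) ^ p ∂μ) ^ (1 / p)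

/-- Wasserstein-`p` CLT transfer from the unweighted block sum
`S_m = I_m^{-1/2} ∑ Γ^{-1/2} M_k` to the step-size-weighted block sum
`Ẑ_m = Γ̂_m^{-1/2} ∑ √γ_k Γ^{-1/2} M_k`: if `{Γ^{-1/2} M_k}` is a martingale
difference sequence with Burkholder–Rosenthal constant `C_p^{BR} κ_p`, `γ_k = γ₁ k^{-a}`,
and `W_p(S_m, Z) < ∞` for a standard Gaussian `Z`, then
`W_p(Ẑ_m, Z) ≤ C_p^{BR} κ_p · a I_m / k_m + W_p(S_m, Z)`. -/

lemma abs_sqrt_sub_sqrt_le {x y : ℝ} (hx : 0 ≤ x) (hy : 0 < y) :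
    |Real.sqrt x - Real.sqrt y| ≤ |x - y| / Real.sqrt y := by
  rw [le_div_iff₀ (Real.sqrt_pos.2 hy)]
  calc |Real.sqrt x - Real.sqrt y| * Real.sqrt y
      ≤ |Real.sqrt x - Real.sqrt y| * (Real.sqrt x + Real.sqrt y) := by
        apply mul_le_mul_of_nonneg_left _ (abs_nonneg _)
        linarith [Real.sqrt_nonneg x]
    _ = |x - y| := by
        rw [← abs_of_nonneg (by positivity : (0:ℝ) ≤ Real.sqrt x + Real.sqrt y), ← abs_mul]
        congr 1
        have h1 := Real.sq_sqrt hx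
        have h2 := Real.sq_sqrt hy.le
        nlinarith

lemma weight_bound (γ : ℕ → ℝ) (γ1 a : ℝ)
    (hγ : ∀ k, γ k = γ1 * (k : ℝ) ^ (-a))
    (ha0 : 0 < a) (ha1 : a ≤ 1) (hγ1 : 0 < γ1)
    (km kmp1 : ℕ) (hkm : 1 ≤ km) (hlt : km < kmp1)
    (I : ℕ) (hI : I = kmp1 - km)
    (cumstep : ℝ) (hcum : cumstep = ∑ k ∈ Finset.Ico km kmp1, γ k) :
    Real.sqrt (∑ k ∈ Finset.Ico km kmp1,
        (Real.sqrt (γ k) / Real.sqrt cumstep - 1 / Real.sqrt (I : ℝ)) ^ 2)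
      ≤ a * (I : ℝ) / (km : ℝ) := by
  set n := kmp1 - 1 with hn
  have hkmn : km ≤ n := by omega
  have hγpos : ∀ k : ℕ, 1 ≤ k → 0 < γ k := fun k hk => by
    rw [hγ]; exact mul_pos hγ1 (Real.rpow_pos_of_pos (by exact_mod_cast hk) _)
  have hmono : ∀ k l : ℕ, 1 ≤ k → k ≤ l → γ l ≤ γ k := fun k l hk hkl => by
    rw [hγ, hγ]
    apply mul_le_mul_of_nonneg_left _ hγ1.le
    exact Real.rpow_le_rpow_of_nonpos (by exact_mod_cast hk) (by exact_mod_cast hkl)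
      (by linarith)
  have hγn : 0 < γ n := hγpos n (le_trans hkm hkmn)
  have hγkm : 0 < γ km := hγpos km hkm
  have hIcard : (Finset.Ico km kmp1).card = I := by rw [Nat.card_Ico]; omega
  have hIpos : 0 < I := by omega
  have hIR : (0:ℝ) < I := by exact_mod_cast hIpos
  have hblo : ∀ k ∈ Finset.Ico km kmp1, γ n ≤ γ k := fun k hk => by
    rw [Finset.mem_Ico] at hk
    exact hmono k n (le_trans hkm hk.1) (by omega)
  have hbhi : ∀ k ∈ Finset.Ico km kmp1, γ k ≤ γ km := fun k hk => by
    rw [Finset.mem_Ico] at hk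
    exact hmono km k hkm hk.1
  have hcum_lo : (I : ℝ) * γ n ≤ cumstep := by
    rw [hcum, ← hIcard]
    have := Finset.card_nsmul_le_sum (Finset.Ico km kmp1) γ (γ n) hblo
    simpa [nsmul_eq_mul] using this
  have hcum_hi : cumstep ≤ (I : ℝ) * γ km := by
    rw [hcum, ← hIcard]
    have := Finset.sum_le_card_nsmul (Finset.Ico km kmp1) γ (γ km) hbhi
    simpa [nsmul_eq_mul] using this
  have hcpos : 0 < cumstep := lt_of_lt_of_le (by positivity) hcum_lo
  set B : ℝ := (γ km - γ n) / γ n with hB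
  have hγnkm : γ n ≤ γ km := hmono km n hkm hkmn
  have hBnn : 0 ≤ B := by apply div_nonneg; linarith; exact hγn.le
  have hsIpos : 0 < Real.sqrt (I:ℝ) := Real.sqrt_pos.2 hIR
  have hterm : ∀ k ∈ Finset.Ico km kmp1,
      (Real.sqrt (γ k) / Real.sqrt cumstep - 1 / Real.sqrt (I : ℝ)) ^ 2
        ≤ (B / Real.sqrt I) ^ 2 := by
    intro k hk
    have hγk : 0 < γ k := lt_of_lt_of_le hγn (hblo k hk)
    have e1 : Real.sqrt (γ k) / Real.sqrt cumstep = Real.sqrt (γ k / cumstep) := by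
      rw [Real.sqrt_div hγk.le]
    have e2 : (1:ℝ) / Real.sqrt (I : ℝ) = Real.sqrt (1 / (I : ℝ)) := by
      rw [Real.sqrt_div' 1 (by norm_num), Real.sqrt_one]
    rw [e1, e2]
    have hx_hi : γ k / cumstep ≤ γ km / cumstep := by gcongr; exact hbhi k hk
    have hx_lo : γ n / cumstep ≤ γ k / cumstep := by gcongr; exact hblo k hk
    have hy_hi : 1 / (I:ℝ) ≤ γ km / cumstep := by
      rw [div_le_div_iff₀ hIR hcpos]; linarith
    have hy_lo : γ n / cumstep ≤ 1 / (I:ℝ) := by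
      rw [div_le_div_iff₀ hcpos hIR]; linarith
    have h1 : |γ k / cumstep - 1 / (I:ℝ)| ≤ (γ km - γ n) / cumstep := by
      rw [abs_le]
      constructor
      · rw [sub_div]; nlinarith
      · rw [sub_div]; nlinarith
    have h2 : (γ km - γ n) / cumstep ≤ (γ km - γ n) / ((I:ℝ) * γ n) := by
      gcongr <;> first | positivity | linarith
    have habs : |Real.sqrt (γ k / cumstep) - Real.sqrt (1 / (I:ℝ))| ≤ B / Real.sqrt I := by
      refine le_trans (abs_sqrt_sub_sqrt_le (by positivity) (by positivity)) ?_
      rw [← e2, div_div_eq_mul_div, div_one]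
      have h3 : |γ k / cumstep - 1 / (I:ℝ)| * Real.sqrt (I:ℝ)
          ≤ ((γ km - γ n) / ((I:ℝ) * γ n)) * Real.sqrt (I:ℝ) := by
        apply mul_le_mul_of_nonneg_right (h1.trans h2) hsIpos.le
      refine h3.trans (le_of_eq ?_)
      have hss : Real.sqrt (I:ℝ) * Real.sqrt (I:ℝ) = (I:ℝ) := Real.mul_self_sqrt hIR.le
      rw [hB]
      field_simp
      linear_combination (γ km - γ n) * hss
    calc (Real.sqrt (γ k / cumstep) - Real.sqrt (1 / (I:ℝ))) ^ 2
        = |Real.sqrt (γ k / cumstep) - Real.sqrt (1 / (I:ℝ))| ^ 2 := (sq_abs _).symm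
      _ ≤ (B / Real.sqrt I) ^ 2 := pow_le_pow_left₀ (abs_nonneg _) habs 2
  have hsum : (∑ k ∈ Finset.Ico km kmp1,
      (Real.sqrt (γ k) / Real.sqrt cumstep - 1 / Real.sqrt (I : ℝ)) ^ 2) ≤ B ^ 2 := by
    calc (∑ k ∈ Finset.Ico km kmp1,
        (Real.sqrt (γ k) / Real.sqrt cumstep - 1 / Real.sqrt (I : ℝ)) ^ 2)
        ≤ (Finset.Ico km kmp1).card • ((B / Real.sqrt I) ^ 2) :=
          Finset.sum_le_card_nsmul _ _ _ hterm
      _ = (I : ℝ) * (B / Real.sqrt I) ^ 2 := by rw [hIcard, nsmul_eq_mul]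
      _ = B ^ 2 := by
          rw [div_pow, Real.sq_sqrt hIR.le]
          field_simp
  have hsq : Real.sqrt (∑ k ∈ Finset.Ico km kmp1,
      (Real.sqrt (γ k) / Real.sqrt cumstep - 1 / Real.sqrt (I : ℝ)) ^ 2) ≤ B := by
    refine le_trans (Real.sqrt_le_sqrt hsum) ?_
    rw [Real.sqrt_sq hBnn]
  refine hsq.trans ?_
  have hkmR : (0:ℝ) < km := by exact_mod_cast hkm
  have hnR : (0:ℝ) < n := by exact_mod_cast (le_trans hkm hkmn)
  have hratio : γ km / γ n = ((n : ℝ) / km) ^ a := by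
    rw [hγ, hγ, mul_div_mul_left _ _ (ne_of_gt hγ1)]
    rw [Real.rpow_neg hkmR.le, Real.rpow_neg hnR.le, div_eq_mul_inv, inv_inv,
      inv_mul_eq_div, ← Real.div_rpow hnR.le hkmR.le]
  have hBval : B = γ km / γ n - 1 := by rw [hB]; field_simp
  rw [hBval, hratio]
  have hs1 : (1:ℝ) ≤ (n:ℝ)/km := by
    rw [le_div_iff₀ hkmR, one_mul]; exact_mod_cast hkmn
  have hbern : ((n : ℝ) / km) ^ a ≤ 1 + a * ((n : ℝ) / km - 1) := by
    have := rpow_one_add_le_one_add_mul_self (s := (n : ℝ) / km - 1)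
      (by linarith) ha0.le ha1
    simpa using this
  have hnI : (n : ℝ) / km - 1 ≤ (I : ℝ) / km := by
    have h4 : (n : ℝ) = (kmp1 : ℝ) - 1 := by
      rw [hn]; push_cast [Nat.cast_sub (by omega : 1 ≤ kmp1)]; ring
    have hIc : (I : ℝ) = (kmp1 : ℝ) - km := by
      rw [hI]; push_cast [Nat.cast_sub (le_of_lt hlt)]; ring
    have h5 : (n:ℝ) - km ≤ (I:ℝ) := by rw [h4, hIc]; linarith
    rw [div_sub_one (ne_of_gt hkmR), div_le_div_iff₀ hkmR hkmR]
    exact mul_le_mul_of_nonneg_right h5 hkmR.le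
  calc ((n : ℝ) / km) ^ a - 1 ≤ a * ((n : ℝ) / km - 1) := by linarith
    _ ≤ a * ((I : ℝ) / km) := mul_le_mul_of_nonneg_left hnI ha0.le
    _ = a * (I : ℝ) / km := by ring

lemma eucl_eq_norm {d : ℕ} (v : Fin d → ℝ) :
    eucl v = ‖(WithLp.equiv 2 (∀ _ : Fin d, ℝ)).symm v‖ := by
  rw [EuclideanSpace.norm_eq, eucl]
  congr 1
  refine Finset.sum_congr rfl fun i _ => ?_
  rw [Real.norm_eq_abs, sq_abs]
  rfl

lemma eucl_nonneg {d : ℕ} (v : Fin d → ℝ) : 0 ≤ eucl v := Real.sqrt_nonneg _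

lemma eucl_triangle {d : ℕ} (x y z : Fin d → ℝ) :
    eucl (x - z) ≤ eucl (x - y) + eucl (y - z) := by
  simp only [eucl_eq_norm, WithLp.equiv_symm_apply, WithLp.toLp_sub]
  exact norm_sub_le_norm_sub_add_norm_sub _ _ _

lemma eucl_continuous {d : ℕ} : Continuous (eucl (d := d)) := by
  apply Real.continuous_sqrt.comp
  exact continuous_finset_sum _ fun i _ => (continuous_apply i).pow 2

theorem wasserstein_transfer (d : ℕ) {Ω : Type*} {m0 : MeasurableSpace Ω}
    (μ : Measure Ω) [IsProbabilityMeasure μ]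
    (N : ℕ → Ω → Fin d → ℝ)
    (hmeas : ∀ k, Measurable (N k))
    (p : ℝ) (hp : 1 ≤ p)
    (c : ℝ≥0∞)
    (km kmp1 : ℕ)
    (α : ℕ → ℝ)
    (Zhat S : Ω → Fin d → ℝ)
    (hZm : Measurable Zhat) (hSm : Measurable S)
    (hdiff : ∀ ω, Zhat ω - S ω = ∑ k ∈ Finset.Ico km kmp1, α k • N k ω)
    (hc : LpN μ p (fun ω => Zhat ω - S ω) ≤ c) :
    Wp p (μ.map Zhat) (stdGaussian d)
      ≤ c + Wp p (μ.map S) (stdGaussian d) := by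
  classical
  have hp0 : 0 < p := lt_of_lt_of_le one_pos hp
  set cost : (Fin d → ℝ) × (Fin d → ℝ) → ℝ≥0∞ := fun q => ENNReal.ofReal (eucl (q.1 - q.2)) ^ p with hcostdef
  have hcost : Measurable cost :=
    ENNReal.continuous_rpow_const.measurable.comp
      ((eucl_continuous.comp (continuous_fst.sub continuous_snd)).measurable.ennreal_ofReal)
  have key : ∀ π : Measure ((Fin d → ℝ) × (Fin d → ℝ)), π.map Prod.fst = μ.map S →
      π.map Prod.snd = stdGaussian d →
      Wp p (μ.map Zhat) (stdGaussian d) ≤ c + (∫⁻ q, cost q ∂π) ^ (1 / p) := by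
    intro π hπ1 hπ2
    haveI : IsProbabilityMeasure (μ.map S) := Measure.isProbabilityMeasure_map hSm.aemeasurable
    haveI hπP : IsProbabilityMeasure π := by
      constructor
      have : (π.map Prod.fst) Set.univ = π Set.univ :=
        Measure.map_apply measurable_fst MeasurableSet.univ
      rw [← this, hπ1]
      exact measure_univ
    set ν := π.condKernel with hν
    set κ' : Kernel ((Fin d → ℝ) × (Fin d → ℝ)) (Fin d → ℝ) := ν.comap Prod.snd measurable_snd with hκ'
    set π₀ : Measure ((Fin d → ℝ) × (Fin d → ℝ)) := μ.map (fun ω => (Zhat ω, S ω)) with hπ₀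
    have hpairm : Measurable fun ω => (Zhat ω, S ω) := hZm.prodMk hSm
    haveI : IsProbabilityMeasure π₀ := Measure.isProbabilityMeasure_map hpairm.aemeasurable
    set ρ : Measure (((Fin d → ℝ) × (Fin d → ℝ)) × (Fin d → ℝ)) := π₀ ⊗ₘ κ' with hρ
    have hρfst : ρ.map Prod.fst = π₀ := Measure.fst_compProd π₀ κ'
    have hπ₀snd : π₀.map Prod.snd = μ.map S := by
      rw [hπ₀, Measure.map_map measurable_snd hpairm]
      rfl
    have hgmeas : Measurable fun q : ((Fin d → ℝ) × (Fin d → ℝ)) × (Fin d → ℝ) => (q.1.2, q.2) :=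
      measurable_fst.snd.prodMk measurable_snd
    have hg1meas : Measurable fun q : ((Fin d → ℝ) × (Fin d → ℝ)) × (Fin d → ℝ) => (q.1.1, q.2) :=
      measurable_fst.fst.prodMk measurable_snd
    have hρmap2 : ρ.map (fun q => (q.1.2, q.2)) = π := by
      ext s hs
      rw [Measure.map_apply hgmeas hs, hρ, Measure.compProd_apply (hgmeas hs)]
      have e1 : ∀ ab : (Fin d → ℝ) × (Fin d → ℝ), κ' ab (Prod.mk ab ⁻¹' ((fun q : ((Fin d → ℝ) × (Fin d → ℝ)) × (Fin d → ℝ) => (q.1.2, q.2)) ⁻¹' s))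
          = ν ab.2 (Prod.mk ab.2 ⁻¹' s) := by
        intro ab
        rw [hκ', Kernel.comap_apply]
        rfl
      calc ∫⁻ ab, κ' ab (Prod.mk ab ⁻¹' ((fun q : ((Fin d → ℝ) × (Fin d → ℝ)) × (Fin d → ℝ) => (q.1.2, q.2)) ⁻¹' s)) ∂π₀
          = ∫⁻ ab, ν ab.2 (Prod.mk ab.2 ⁻¹' s) ∂π₀ := lintegral_congr e1
        _ = ∫⁻ b, ν b (Prod.mk b ⁻¹' s) ∂(π₀.map Prod.snd) :=
            (lintegral_map (Kernel.measurable_kernel_prodMk_left hs) measurable_snd).symm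
        _ = ∫⁻ b, ν b (Prod.mk b ⁻¹' s) ∂π.fst := by rw [hπ₀snd, ← hπ1]; rfl
        _ = (π.fst ⊗ₘ ν) s := (Measure.compProd_apply hs).symm
        _ = π s := by rw [hν, Measure.disintegrate]
    set θ : Measure ((Fin d → ℝ) × (Fin d → ℝ)) := ρ.map (fun q => (q.1.1, q.2)) with hθ
    have hθ1 : θ.map Prod.fst = μ.map Zhat := by
      rw [hθ, Measure.map_map measurable_fst hg1meas]
      have : (Prod.fst ∘ fun q : ((Fin d → ℝ) × (Fin d → ℝ)) × (Fin d → ℝ) => (q.1.1, q.2)) = Prod.fst ∘ Prod.fst := rfl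
      rw [this, ← Measure.map_map measurable_fst measurable_fst, hρfst, hπ₀,
        Measure.map_map measurable_fst hpairm]
      rfl
    have hθ2 : θ.map Prod.snd = stdGaussian d := by
      rw [hθ, Measure.map_map measurable_snd hg1meas]
      have : (Prod.snd ∘ fun q : ((Fin d → ℝ) × (Fin d → ℝ)) × (Fin d → ℝ) => (q.1.1, q.2))
          = Prod.snd ∘ fun q : ((Fin d → ℝ) × (Fin d → ℝ)) × (Fin d → ℝ) => (q.1.2, q.2) := rfl
      rw [this, ← Measure.map_map measurable_snd hgmeas, hρmap2, hπ2]
    refine le_trans (iInf_le_of_le θ (iInf_le_of_le ⟨hθ1, hθ2⟩ le_rfl)) ?_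
    -- cost bound
    set F : ((Fin d → ℝ) × (Fin d → ℝ)) × (Fin d → ℝ) → ℝ≥0∞ := fun q => ENNReal.ofReal (eucl (q.1.1 - q.1.2)) with hF
    set Gf : ((Fin d → ℝ) × (Fin d → ℝ)) × (Fin d → ℝ) → ℝ≥0∞ := fun q => ENNReal.ofReal (eucl (q.1.2 - q.2)) with hGf
    have hFm : Measurable F :=
      (eucl_continuous.comp ((continuous_fst.comp continuous_fst).sub
        (continuous_snd.comp continuous_fst))).measurable.ennreal_ofReal
    have hGfm : Measurable Gf :=
      (eucl_continuous.comp ((continuous_snd.comp continuous_fst).sub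
        continuous_snd)).measurable.ennreal_ofReal
    have hθcost : (∫⁻ q, cost q ∂θ)
        = ∫⁻ q : ((Fin d → ℝ) × (Fin d → ℝ)) × (Fin d → ℝ), ENNReal.ofReal (eucl (q.1.1 - q.2)) ^ p ∂ρ := by
      rw [hθ, lintegral_map hcost hg1meas]
    have hptw : ∀ q : ((Fin d → ℝ) × (Fin d → ℝ)) × (Fin d → ℝ),
        ENNReal.ofReal (eucl (q.1.1 - q.2)) ^ p ≤ (F q + Gf q) ^ p := by
      intro q
      apply ENNReal.rpow_le_rpow _ hp0.le
      rw [hF, hGf, ← ENNReal.ofReal_add (eucl_nonneg _) (eucl_nonneg _)]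
      exact ENNReal.ofReal_le_ofReal (eucl_triangle _ _ _)
    have hρF : (∫⁻ q, F q ^ p ∂ρ) ^ (1 / p) ≤ c := by
      have h1 : (∫⁻ q, F q ^ p ∂ρ) = ∫⁻ q, cost q ∂(ρ.map Prod.fst) := by
        rw [lintegral_map hcost measurable_fst]
      rw [h1, hρfst, hπ₀, lintegral_map hcost hpairm]
      exact hc
    have hρG : (∫⁻ q, Gf q ^ p ∂ρ) ^ (1 / p) = (∫⁻ q, cost q ∂π) ^ (1 / p) := by
      congr 1
      rw [← hρmap2, lintegral_map hcost hgmeas]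
    calc (∫⁻ q, cost q ∂θ) ^ (1 / p)
        ≤ (∫⁻ q, (F q + Gf q) ^ p ∂ρ) ^ (1 / p) := by
          rw [hθcost]
          exact ENNReal.rpow_le_rpow (lintegral_mono hptw) (by positivity)
      _ ≤ (∫⁻ q, F q ^ p ∂ρ) ^ (1 / p) + (∫⁻ q, Gf q ^ p ∂ρ) ^ (1 / p) :=
          ENNReal.lintegral_Lp_add_le hFm.aemeasurable hGfm.aemeasurable hp
      _ ≤ c + (∫⁻ q, cost q ∂π) ^ (1 / p) := by rw [hρG]; exact add_le_add_left hρF _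
  calc Wp p (μ.map Zhat) (stdGaussian d)
      ≤ ⨅ (π : Measure ((Fin d → ℝ) × (Fin d → ℝ)))
          (_ : π.map Prod.fst = μ.map S ∧ π.map Prod.snd = stdGaussian d),
          (c + (∫⁻ q, cost q ∂π) ^ (1 / p)) :=
        le_iInf fun π => le_iInf fun h => key π h.1 h.2
    _ = c + Wp p (μ.map S) (stdGaussian d) := by
        rw [Wp, ENNReal.add_iInf]
        refine iInf_congr fun π => ?_
        rw [ENNReal.add_iInf]

theorem stmt5 (d : ℕ) {Ω : Type*} {m0 : MeasurableSpace Ω}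
    (μ : Measure Ω) [IsProbabilityMeasure μ]
    (ℱ : Filtration ℕ m0)
    (N : ℕ → Ω → Fin d → ℝ)   -- `N k = Γ^{-1/2} M_k`
    (hadapted : ∀ k, StronglyMeasurable[ℱ k] (N k))
    (hmeas : ∀ k, Measurable (N k))
    (hmds : ∀ k, μ[N (k + 1) | ℱ k] =ᵐ[μ] 0)
    (p : ℝ) (hp : 1 ≤ p)
    (CBR κ : ℝ) (hCBR : 0 < CBR) (hκ : 0 < κ)
    (hBR : ∀ (β : ℕ → ℝ) (j l : ℕ),
      LpN μ p (fun ω => ∑ k ∈ Finset.Ico j l, β k • N k ω)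
        ≤ ENNReal.ofReal (CBR * κ * Real.sqrt (∑ k ∈ Finset.Ico j l, β k ^ 2)))
    (γ : ℕ → ℝ) (γ1 a : ℝ)
    (hγ : ∀ k, γ k = γ1 * (k : ℝ) ^ (-a))
    (ha0 : 0 < a) (ha1 : a ≤ 1) (hγ1 : 0 < γ1)
    (km kmp1 : ℕ) (hkm : 1 ≤ km) (hlt : km < kmp1)
    (I : ℕ) (hI : I = kmp1 - km) (hIle : I ≤ km)
    (cumstep : ℝ) (hcum : cumstep = ∑ k ∈ Finset.Ico km kmp1, γ k)
    (Zhat S : Ω → Fin d → ℝ)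
    (hZhat : ∀ ω, Zhat ω =
      (1 / Real.sqrt cumstep) • ∑ k ∈ Finset.Ico km kmp1, Real.sqrt (γ k) • N k ω)
    (hS : ∀ ω, S ω = (1 / Real.sqrt (I : ℝ)) • ∑ k ∈ Finset.Ico km kmp1, N k ω)
    (hfin : Wp p (μ.map S) (stdGaussian d) ≠ ⊤) :
    Wp p (μ.map Zhat) (stdGaussian d)
      ≤ ENNReal.ofReal (CBR * κ * (a * (I : ℝ) / (km : ℝ)))
        + Wp p (μ.map S) (stdGaussian d) := by
  classical
  set α : ℕ → ℝ := fun k =>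
    Real.sqrt (γ k) / Real.sqrt cumstep - 1 / Real.sqrt (I : ℝ) with hα
  have hdiff : ∀ ω, Zhat ω - S ω = ∑ k ∈ Finset.Ico km kmp1, α k • N k ω := by
    intro ω
    rw [hZhat ω, hS ω, Finset.smul_sum, Finset.smul_sum, ← Finset.sum_sub_distrib]
    refine Finset.sum_congr rfl fun k _ => ?_
    rw [smul_smul, ← sub_smul, hα]
    congr 1
    ring
  have hZm : Measurable Zhat := by
    have h1 : Zhat = fun ω =>
        (1 / Real.sqrt cumstep) • ∑ k ∈ Finset.Ico km kmp1, Real.sqrt (γ k) • N k ω :=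
      funext hZhat
    rw [h1]
    exact (measurable_const_smul _).comp
      (Finset.measurable_sum _ fun k _ => (measurable_const_smul _).comp (hmeas k))
  have hSm : Measurable S := by
    have h1 : S = fun ω => (1 / Real.sqrt (I : ℝ)) • ∑ k ∈ Finset.Ico km kmp1, N k ω :=
      funext hS
    rw [h1]
    exact (measurable_const_smul _).comp (Finset.measurable_sum _ fun k _ => hmeas k)
  have hc : LpN μ p (fun ω => Zhat ω - S ω)
      ≤ ENNReal.ofReal (CBR * κ * (a * (I : ℝ) / (km : ℝ))) := by
    have heq : (fun ω => Zhat ω - S ω)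
        = fun ω => ∑ k ∈ Finset.Ico km kmp1, α k • N k ω := funext hdiff
    rw [heq]
    refine (hBR α km kmp1).trans (ENNReal.ofReal_le_ofReal ?_)
    refine mul_le_mul_of_nonneg_left ?_ (by positivity)
    exact weight_bound γ γ1 a hγ ha0 ha1 hγ1 km kmp1 hkm hlt I hI cumstep hcum
  exact wasserstein_transfer d μ N hmeas p hp _ km kmp1 α Zhat S hZm hSm hdiff hc
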